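/- Let H be a real inner product space, g : H → H → ℝ a symmetric bilinear form, and π : H →ₗ H a self-adjoint linear map, i.e. ⟨π u, v⟩ = ⟨u, π v⟩ for all u, v ∈ H. Let C_ex > 0, k > 0, M ≥ 1, define the energy E(u, φ) := (C_ex/2) * g u u − (1/2) * ⟨π u, u⟩ − ⟨φ, u⟩, and let m, f : Fin (M+1) → H, Π, f½ : Fin M → H, and a : Fin M → ℝ be such that for every j < M the discrete energy identity (C_ex/(2k)) * (g (m (j+1)) (m (j+1)) − g (m j) (m j)) + a j = ⟨(m (j+1) − m j)/k, Π j + f½ j⟩ holds. Then for every i < M: E(m (i+1), f (i+1)) + k * ∑_{j=0}^{i} a j + k * ∑_{j=0}^{i} ⟨(f (j+1) − f j)/k, (m j + m (j+1))/2⟩ = E(m 0, f 0) + k * ∑_{j=0}^{i} ⟨(m (j+1) − m j)/k, Π j − π ((m j + m (j+1))/2)⟩ + k * ∑_{j=0}^{i} ⟨(m (j+1) − m j)/k, f½ j − (f j + f (j+1))/2⟩. -/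

import Mathlib

open scoped InnerProductSpace BigOperators

noncomputable section

private lemma tele_aux {M : ℕ} (E : Fin (M + 1) → ℝ) (A B : Fin M → ℝ)
    (h : ∀ j : Fin M, E j.succ + A j = E j.castSucc + B j) :
    ∀ i : Fin M, E i.succ + ∑ j ∈ Finset.Iic i, A j
      = E 0 + ∑ j ∈ Finset.Iic i, B j := by
  rintro ⟨n, hn⟩
  induction n with
  | zero =>
      have hIic : (Finset.Iic (⟨0, hn⟩ : Fin M)) = {⟨0, hn⟩} := by
        ext x; simp [Finset.mem_Iic, Fin.le_def, Fin.ext_iff]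
      rw [hIic, Finset.sum_singleton, Finset.sum_singleton]
      have hstep := h ⟨0, hn⟩
      have hc : (⟨0, hn⟩ : Fin M).castSucc = 0 := rfl
      rw [hc] at hstep
      linarith
  | succ n ih =>
      have hn' : n < M := Nat.lt_of_succ_lt hn
      have hins : Finset.Iic (⟨n + 1, hn⟩ : Fin M)
          = insert ⟨n + 1, hn⟩ (Finset.Iic (⟨n, hn'⟩ : Fin M)) := by
        ext x
        simp only [Finset.mem_Iic, Finset.mem_insert, Fin.le_def, Fin.ext_iff]
        omega
      have hnot : (⟨n + 1, hn⟩ : Fin M) ∉ Finset.Iic (⟨n, hn'⟩ : Fin M) := by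
        simp [Finset.mem_Iic, Fin.le_def]
      rw [hins, Finset.sum_insert hnot, Finset.sum_insert hnot]
      have hstep := h ⟨n + 1, hn⟩
      have hcast : (⟨n + 1, hn⟩ : Fin M).castSucc = (⟨n, hn'⟩ : Fin M).succ := rfl
      rw [hcast] at hstep
      have ihn := ih hn'
      linarith

/-- the telescoped discrete energy balance of the midpoint scheme
(from the proof of Theorem 3.1(c)). Here `E(u, φ) := (C_ex/2) g u u − ½⟨π u, u⟩ − ⟨φ, u⟩`
is written out explicitly, `Pih j` plays the role of `Π^j`, `fh j` that of `f^{j+1/2}`,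
and `a j` that of the damping term `α‖d_t m^j‖²_h`. -/
theorem stmt10 {H : Type*} [NormedAddCommGroup H] [InnerProductSpace ℝ H]
    (g : H →ₗ[ℝ] H →ₗ[ℝ] ℝ) (hg : ∀ u v : H, g u v = g v u)
    (π : H →ₗ[ℝ] H) (hπ : ∀ u v : H, ⟪π u, v⟫_ℝ = ⟪u, π v⟫_ℝ)
    (Cex k : ℝ) (hCex : 0 < Cex) (hk : 0 < k)
    (M : ℕ) (hM : 1 ≤ M)
    (m f : Fin (M + 1) → H) (Pih fh : Fin M → H) (a : Fin M → ℝ)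
    (hE : ∀ j : Fin M,
      Cex / (2 * k) * (g (m j.succ) (m j.succ) - g (m j.castSucc) (m j.castSucc)) + a j
        = ⟪k⁻¹ • (m j.succ - m j.castSucc), Pih j + fh j⟫_ℝ) :
    ∀ i : Fin M,
      (Cex / 2 * g (m i.succ) (m i.succ)
          - (1 / 2) * ⟪π (m i.succ), m i.succ⟫_ℝ - ⟪f i.succ, m i.succ⟫_ℝ)
        + k * ∑ j ∈ Finset.Iic i, a j
        + k * ∑ j ∈ Finset.Iic i,
            ⟪k⁻¹ • (f j.succ - f j.castSucc), (2:ℝ)⁻¹ • (m j.castSucc + m j.succ)⟫_ℝ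
      = (Cex / 2 * g (m 0) (m 0) - (1 / 2) * ⟪π (m 0), m 0⟫_ℝ - ⟪f 0, m 0⟫_ℝ)
        + k * ∑ j ∈ Finset.Iic i,
            ⟪k⁻¹ • (m j.succ - m j.castSucc),
              Pih j - π ((2:ℝ)⁻¹ • (m j.castSucc + m j.succ))⟫_ℝ
        + k * ∑ j ∈ Finset.Iic i,
            ⟪k⁻¹ • (m j.succ - m j.castSucc),
              fh j - (2:ℝ)⁻¹ • (f j.castSucc + f j.succ)⟫_ℝ := by
  intro i
  have hk' : k ≠ 0 := ne_of_gt hk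
  -- the energy and increment functions
  set E : Fin (M + 1) → ℝ := fun n =>
    Cex / 2 * g (m n) (m n) - (1 / 2) * ⟪π (m n), m n⟫_ℝ - ⟪f n, m n⟫_ℝ with hEdef
  set A : Fin M → ℝ := fun j =>
    k * a j + k * ⟪k⁻¹ • (f j.succ - f j.castSucc), (2:ℝ)⁻¹ • (m j.castSucc + m j.succ)⟫_ℝ
    with hAdef
  set B : Fin M → ℝ := fun j =>
    k * ⟪k⁻¹ • (m j.succ - m j.castSucc),
        Pih j - π ((2:ℝ)⁻¹ • (m j.castSucc + m j.succ))⟫_ℝ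
    + k * ⟪k⁻¹ • (m j.succ - m j.castSucc),
        fh j - (2:ℝ)⁻¹ • (f j.castSucc + f j.succ)⟫_ℝ with hBdef
  have key : ∀ j : Fin M, E j.succ + A j = E j.castSucc + B j := by
    intro j
    have hej := hE j
    simp only [inner_sub_left, inner_add_left, inner_sub_right, inner_add_right,
      real_inner_smul_left, real_inner_smul_right, map_add, map_smul,
      LinearMap.smul_apply, smul_eq_mul] at hej
    have hej2 : Cex * (g (m j.succ) (m j.succ) - g (m j.castSucc) (m j.castSucc))
        + 2 * k * a j
        = 2 * ((⟪m j.succ, Pih j⟫_ℝ - ⟪m j.castSucc, Pih j⟫_ℝ)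
            + (⟪m j.succ, fh j⟫_ℝ - ⟪m j.castSucc, fh j⟫_ℝ)) := by
      apply mul_left_cancel₀ hk'
      field_simp at hej
      linear_combination k * hej
    have h1 : ⟪π (m j.succ), m j.succ⟫_ℝ = ⟪m j.succ, π (m j.succ)⟫_ℝ :=
      real_inner_comm _ _
    have h2 : ⟪π (m j.castSucc), m j.castSucc⟫_ℝ = ⟪m j.castSucc, π (m j.castSucc)⟫_ℝ :=
      real_inner_comm _ _
    have h3 : ⟪m j.succ, π (m j.castSucc)⟫_ℝ = ⟪m j.castSucc, π (m j.succ)⟫_ℝ := by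
      rw [real_inner_comm, hπ]
    have h4 : ⟪f j.succ, m j.castSucc⟫_ℝ = ⟪m j.castSucc, f j.succ⟫_ℝ :=
      real_inner_comm _ _
    have h5 : ⟪f j.castSucc, m j.succ⟫_ℝ = ⟪m j.succ, f j.castSucc⟫_ℝ :=
      real_inner_comm _ _
    have h6 : ⟪f j.succ, m j.succ⟫_ℝ = ⟪m j.succ, f j.succ⟫_ℝ := real_inner_comm _ _
    have h7 : ⟪f j.castSucc, m j.castSucc⟫_ℝ = ⟪m j.castSucc, f j.castSucc⟫_ℝ :=
      real_inner_comm _ _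
    have hcan : ∀ w z : H, k * ⟪k⁻¹ • w, z⟫_ℝ = ⟪w, z⟫_ℝ := by
      intro w z
      rw [real_inner_smul_left, ← mul_assoc, mul_inv_cancel₀ hk', one_mul]
    simp only [hEdef, hAdef, hBdef]
    simp only [hcan]
    simp only [inner_sub_left, inner_add_left, inner_sub_right, inner_add_right,
      real_inner_smul_left, real_inner_smul_right, map_add, map_smul,
      LinearMap.smul_apply, smul_eq_mul]
    linarith [hej2, h1, h2, h3, h4, h5, h6, h7]
  have tele := tele_aux E A B key i
  have hsA : ∑ j ∈ Finset.Iic i, A j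
      = ∑ j ∈ Finset.Iic i, k * a j
        + ∑ j ∈ Finset.Iic i,
            k * ⟪k⁻¹ • (f j.succ - f j.castSucc), (2:ℝ)⁻¹ • (m j.castSucc + m j.succ)⟫_ℝ := by
    simp only [hAdef]; exact Finset.sum_add_distrib
  have hsB : ∑ j ∈ Finset.Iic i, B j
      = ∑ j ∈ Finset.Iic i,
          k * ⟪k⁻¹ • (m j.succ - m j.castSucc),
              Pih j - π ((2:ℝ)⁻¹ • (m j.castSucc + m j.succ))⟫_ℝ
        + ∑ j ∈ Finset.Iic i,
          k * ⟪k⁻¹ • (m j.succ - m j.castSucc),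
              fh j - (2:ℝ)⁻¹ • (f j.castSucc + f j.succ)⟫_ℝ := by
    simp only [hBdef]; exact Finset.sum_add_distrib
  rw [hsA, hsB] at tele
  have hE0 : E 0 = Cex / 2 * g (m 0) (m 0) - (1 / 2) * ⟪π (m 0), m 0⟫_ℝ - ⟪f 0, m 0⟫_ℝ := rfl
  have hEi : E i.succ = Cex / 2 * g (m i.succ) (m i.succ)
      - (1 / 2) * ⟪π (m i.succ), m i.succ⟫_ℝ - ⟪f i.succ, m i.succ⟫_ℝ := rfl
  rw [hE0, hEi] at tele
  rw [Finset.mul_sum, Finset.mul_sum, Finset.mul_sum, Finset.mul_sum]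
  linarith [tele]

end
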